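/- Fix a real number r and a natural number n ≥ 2, and define f_n(x) = (r^2 - x^2)^n / (2^n · n!) for real x. Then the second derivative of f_n satisfies f_n''(x) = -(2n - 1) · f_{n-1}(x) + r^2 · f_{n-2}(x) for all real x. -/

import Mathlib

lemma hasDerivAt_rxpow (r : ℝ) (m : ℕ) (x : ℝ) :
    HasDerivAt (fun x : ℝ => (r ^ 2 - x ^ 2) ^ m)
      ((m : ℝ) * (r ^ 2 - x ^ 2) ^ (m - 1) * (-(2 * x))) x := by
  have h1 : HasDerivAt (fun x : ℝ => r ^ 2 - x ^ 2) (-(2 * x)) x := by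
    simpa using (hasDerivAt_pow 2 x).const_sub (r ^ 2)
  simpa [Function.comp_def] using (hasDerivAt_pow m (r ^ 2 - x ^ 2)).comp x h1

theorem second_deriv_f (r : ℝ) (n : ℕ) (hn : 2 ≤ n)
    (f : ℕ → ℝ → ℝ)
    (hf : ∀ m x, f m x = (r ^ 2 - x ^ 2) ^ m / (2 ^ m * m.factorial)) :
    ∀ x : ℝ, deriv (deriv (f n)) x = -(2 * (n : ℝ) - 1) * f (n - 1) x + r ^ 2 * f (n - 2) x := by
  obtain ⟨k, rfl⟩ : ∃ k, n = k + 2 := ⟨n - 2, by omega⟩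
  intro x
  have hfn : f (k + 2) = fun x => (r ^ 2 - x ^ 2) ^ (k + 2) / (2 ^ (k + 2) * (k + 2).factorial) :=
    funext fun x => hf _ x
  set c : ℝ := 2 ^ (k + 2) * (k + 2).factorial with hc
  have hd1 : deriv (f (k + 2)) = fun x =>
      (((k : ℝ) + 2) * (r ^ 2 - x ^ 2) ^ (k + 1) * (-(2 * x))) / c := by
    funext y
    rw [hfn]
    have := (hasDerivAt_rxpow r (k + 2) y).div_const c
    simpa using this.deriv
  rw [hd1]
  have h1 := hasDerivAt_rxpow r (k + 1) x
  simp only [Nat.add_sub_cancel] at h1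
  have h2 : HasDerivAt (fun x : ℝ => -(2 * x)) (-2) x := by
    simpa [Pi.neg_def] using ((hasDerivAt_id x).const_mul (2 : ℝ)).neg
  have hD := (((h1.const_mul ((k : ℝ) + 2)).mul h2).div_const c)
  simp only [Pi.mul_def] at hD
  rw [hD.deriv, hf, hf]
  simp only [Nat.add_sub_cancel]
  have hk2 : k + 2 - 1 = k + 1 := rfl
  rw [hk2]
  have hfac : ((k + 2).factorial : ℝ) = ((k : ℝ) + 2) * ((k : ℝ) + 1) * (k.factorial : ℝ) := by
    rw [Nat.factorial_succ, Nat.factorial_succ]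
    push_cast
    ring
  have hfac1 : ((k + 1).factorial : ℝ) = ((k : ℝ) + 1) * (k.factorial : ℝ) := by
    rw [Nat.factorial_succ]; push_cast; ring
  have hfk : (k.factorial : ℝ) ≠ 0 := Nat.cast_ne_zero.mpr k.factorial_ne_zero
  rw [hc, hfac, hfac1]
  have h2pos : (2 : ℝ) ^ (k) ≠ 0 := by positivity
  push_cast
  field_simp
  ring
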